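/- Let H1 and H2 be finite loopless hypergraphs. Then the chromatic number of their Cartesian product satisfies χ(H1□H2) = max{χ(H1), χ(H2)}, and the strong chromatic number satisfies χ_s(H1□H2) = max{χ_s(H1), χ_s(H2)}. -/

import Mathlib

/-!
Basic definitions: finite hypergraphs (a finite nonempty vertex set `V`, given by
`[Fintype V] [Nonempty V]`, together with a set of nonempty edges), walks, distance,
connectedness, simplicity, rank, colorings, Helly property, covers,
the various hypergraph products, 2-sections, and graph products.
-/

/-- A hypergraph on a vertex type `V`: a collection of nonempty edges (finite subsets of `V`). -/
structure FinHypergraph (V : Type*) where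
  edges : Set (Finset V)
  nonempty_edges : ∀ e ∈ edges, e.Nonempty

namespace FinHypergraph

variable {V V₁ V₂ : Type*}

/-- There is a walk of length `n` from `u` to `v`: a sequence of vertices `w 0, …, w n`
and edges `f 1, …, f n` with consecutive vertices distinct and both contained
in the corresponding edge. -/
def HasWalk (H : FinHypergraph V) (u v : V) (n : ℕ) : Prop :=
  ∃ (w : Fin (n + 1) → V) (f : Fin n → Finset V),
    w 0 = u ∧ w (Fin.last n) = v ∧
      ∀ i : Fin n, f i ∈ H.edges ∧ w i.castSucc ≠ w i.succ ∧
        w i.castSucc ∈ f i ∧ w i.succ ∈ f i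

/-- The distance between two vertices: the minimum length of a walk joining them,
`⊤ = ∞` if there is none. -/
noncomputable def dist (H : FinHypergraph V) (u v : V) : ℕ∞ :=
  sInf {x : ℕ∞ | ∃ n : ℕ, x = n ∧ H.HasWalk u v n}

/-- A hypergraph is connected if any two vertices are joined by a walk. -/
def Connected (H : FinHypergraph V) : Prop := ∀ u v : V, ∃ n, H.HasWalk u v n

/-- A hypergraph is simple if every edge has at least two vertices and
no edge is contained in another edge. -/
def Simple (H : FinHypergraph V) : Prop :=
  (∀ e ∈ H.edges, 2 ≤ e.card) ∧ ∀ e ∈ H.edges, ∀ f ∈ H.edges, e ⊆ f → e = f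

/-- A hypergraph is loopless if every edge has at least two vertices. -/
def Loopless (H : FinHypergraph V) : Prop := ∀ e ∈ H.edges, 2 ≤ e.card

/-- The rank: the maximum cardinality of an edge. -/
noncomputable def rank (H : FinHypergraph V) : ℕ := sSup (Finset.card '' H.edges)

/-- The anti-rank: the minimum cardinality of an edge. -/
noncomputable def antirank (H : FinHypergraph V) : ℕ := sInf (Finset.card '' H.edges)

/-- A proper coloring: no color class contains an edge. -/
def IsProperColoring (H : FinHypergraph V) {k : ℕ} (c : V → Fin k) : Prop :=
  ∀ e ∈ H.edges, ∀ i : Fin k, ¬ ∀ v ∈ e, c v = i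

/-- A proper strong coloring: a proper coloring in which the vertices of every
edge receive pairwise distinct colors. -/
def IsStrongColoring (H : FinHypergraph V) {k : ℕ} (c : V → Fin k) : Prop :=
  H.IsProperColoring c ∧ ∀ e ∈ H.edges, ∀ u ∈ e, ∀ v ∈ e, u ≠ v → c u ≠ c v

/-- The chromatic number: the least `k` admitting a proper `k`-coloring. -/
noncomputable def chromaticNumber (H : FinHypergraph V) : ℕ :=
  sInf {k : ℕ | ∃ c : V → Fin k, H.IsProperColoring c}

/-- The strong chromatic number: the least `k` admitting a proper strong `k`-coloring. -/
noncomputable def strongChromaticNumber (H : FinHypergraph V) : ℕ :=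
  sInf {k : ℕ | ∃ c : V → Fin k, H.IsStrongColoring c}

/-- The Helly property: every intersecting family of edges is a star. -/
def Helly (H : FinHypergraph V) : Prop :=
  ∀ E' ⊆ H.edges, (∀ e ∈ E', ∀ f ∈ E', ∃ x, x ∈ e ∧ x ∈ f) → ∃ v, ∀ e ∈ E', v ∈ e

/-- The covering number: the minimum cardinality of a set of vertices meeting every edge. -/
noncomputable def coverNumber (H : FinHypergraph V) : ℕ :=
  sInf {k : ℕ | ∃ T : Finset V, T.card = k ∧ ∀ e ∈ H.edges, ∃ v ∈ T, v ∈ e}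

/-- The Cartesian product of hypergraphs. -/
def cartProd (H₁ : FinHypergraph V₁) (H₂ : FinHypergraph V₂) : FinHypergraph (V₁ × V₂) where
  edges := {E | (∃ x, ∃ f ∈ H₂.edges, E = {x} ×ˢ f) ∨ ∃ e ∈ H₁.edges, ∃ y, E = e ×ˢ {y}}
  nonempty_edges := by
    rintro E (⟨x, f, hf, rfl⟩ | ⟨e, he, y, rfl⟩)
    · exact (Finset.singleton_nonempty x).product (H₂.nonempty_edges f hf)
    · exact (H₁.nonempty_edges e he).product (Finset.singleton_nonempty y)

section Products

variable [DecidableEq V₁] [DecidableEq V₂]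

/-- The minimal-rank-preserving direct product `H₁ ×̌ H₂`. -/
def minDirProd (H₁ : FinHypergraph V₁) (H₂ : FinHypergraph V₂) : FinHypergraph (V₁ × V₂) where
  edges := {E | ∃ e₁ ∈ H₁.edges, ∃ e₂ ∈ H₂.edges,
    E ⊆ e₁ ×ˢ e₂ ∧ E.card = min e₁.card e₂.card ∧
      (E.image Prod.fst).card = min e₁.card e₂.card ∧
      (E.image Prod.snd).card = min e₁.card e₂.card}
  nonempty_edges := by
    rintro E ⟨e₁, h₁, e₂, h₂, -, hc, -, -⟩
    rw [← Finset.card_pos, hc]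
    exact lt_min (Finset.card_pos.mpr (H₁.nonempty_edges e₁ h₁))
      (Finset.card_pos.mpr (H₂.nonempty_edges e₂ h₂))

/-- The maximal-rank-preserving direct product `H₁ ×̂ H₂`. -/
def maxDirProd (H₁ : FinHypergraph V₁) (H₂ : FinHypergraph V₂) : FinHypergraph (V₁ × V₂) where
  edges := {E | ∃ e₁ ∈ H₁.edges, ∃ e₂ ∈ H₂.edges,
    E ⊆ e₁ ×ˢ e₂ ∧ E.card = max e₁.card e₂.card ∧
      E.image Prod.fst = e₁ ∧ E.image Prod.snd = e₂}
  nonempty_edges := by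
    rintro E ⟨e₁, h₁, e₂, h₂, -, hc, -, -⟩
    rw [← Finset.card_pos, hc]
    exact lt_max_iff.mpr (Or.inl (Finset.card_pos.mpr (H₁.nonempty_edges e₁ h₁)))

/-- The non-rank-preserving direct product `H₁ ×̃ H₂`. -/
def nrDirProd (H₁ : FinHypergraph V₁) (H₂ : FinHypergraph V₂) : FinHypergraph (V₁ × V₂) where
  edges := {E | ∃ e ∈ H₁.edges, ∃ f ∈ H₂.edges, ∃ x ∈ e, ∃ y ∈ f,
    E = insert (x, y) ((e.erase x) ×ˢ (f.erase y))}
  nonempty_edges := by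
    rintro E ⟨e, -, f, -, x, -, y, -, rfl⟩
    exact Finset.insert_nonempty _ _

/-- The normal product `H₁ ⊠̌ H₂`: union of the Cartesian product edges and the
minimal-rank-preserving direct product edges. -/
def normalProd (H₁ : FinHypergraph V₁) (H₂ : FinHypergraph V₂) : FinHypergraph (V₁ × V₂) where
  edges := (H₁.cartProd H₂).edges ∪ (H₁.minDirProd H₂).edges
  nonempty_edges := by
    rintro E (h | h)
    · exact (H₁.cartProd H₂).nonempty_edges E h
    · exact (H₁.minDirProd H₂).nonempty_edges E h

/-- The strong product `H₁ ⊠̂ H₂`: union of the Cartesian product edges and the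
maximal-rank-preserving direct product edges. -/
def strongProd (H₁ : FinHypergraph V₁) (H₂ : FinHypergraph V₂) : FinHypergraph (V₁ × V₂) where
  edges := (H₁.cartProd H₂).edges ∪ (H₁.maxDirProd H₂).edges
  nonempty_edges := by
    rintro E (h | h)
    · exact (H₁.cartProd H₂).nonempty_edges E h
    · exact (H₁.maxDirProd H₂).nonempty_edges E h

/-- The lexicographic product `H₁ ∘ H₂`. -/
def lexProd (H₁ : FinHypergraph V₁) (H₂ : FinHypergraph V₂) : FinHypergraph (V₁ × V₂) where
  edges := {E | (E.image Prod.fst ∈ H₁.edges ∧ (E.image Prod.fst).card = E.card) ∨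
    ∃ x, ∃ e₂ ∈ H₂.edges, E = {x} ×ˢ e₂}
  nonempty_edges := by
    rintro E (⟨h₁, hc⟩ | ⟨x, e₂, h₂, rfl⟩)
    · rw [← Finset.card_pos, ← hc]
      exact Finset.card_pos.mpr (H₁.nonempty_edges _ h₁)
    · exact (Finset.singleton_nonempty x).product (H₂.nonempty_edges e₂ h₂)

end Products

/-- The square product `H₁ ■ H₂`. -/
def squareProd (H₁ : FinHypergraph V₁) (H₂ : FinHypergraph V₂) : FinHypergraph (V₁ × V₂) where
  edges := {E | ∃ e₁ ∈ H₁.edges, ∃ e₂ ∈ H₂.edges, E = e₁ ×ˢ e₂}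
  nonempty_edges := by
    rintro E ⟨e₁, h₁, e₂, h₂, rfl⟩
    exact (H₁.nonempty_edges e₁ h₁).product (H₂.nonempty_edges e₂ h₂)

/-- The 2-section of a hypergraph: distinct vertices are adjacent iff they lie
in a common edge. -/
def twoSection (H : FinHypergraph V) : SimpleGraph V where
  Adj x y := x ≠ y ∧ ∃ e ∈ H.edges, x ∈ e ∧ y ∈ e
  symm := by constructor; rintro x y ⟨hxy, e, he, hx, hy⟩; exact ⟨hxy.symm, e, he, hy, hx⟩
  loopless := by constructor; rintro x ⟨hx, -⟩; exact hx rfl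

end FinHypergraph

namespace SimpleGraph

variable {V₁ V₂ : Type*}

/-- The direct (tensor) product of simple graphs. -/
def directProd (G₁ : SimpleGraph V₁) (G₂ : SimpleGraph V₂) : SimpleGraph (V₁ × V₂) where
  Adj x y := G₁.Adj x.1 y.1 ∧ G₂.Adj x.2 y.2
  symm := ⟨fun _ _ ⟨h₁, h₂⟩ => ⟨h₁.symm, h₂.symm⟩⟩
  loopless := ⟨fun x h => G₁.irrefl h.1⟩

/-- The strong product of simple graphs. -/
def strongGraphProd (G₁ : SimpleGraph V₁) (G₂ : SimpleGraph V₂) : SimpleGraph (V₁ × V₂) where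
  Adj x y := x ≠ y ∧ ((x.1 = y.1 ∧ G₂.Adj x.2 y.2) ∨ (x.2 = y.2 ∧ G₁.Adj x.1 y.1) ∨
    (G₁.Adj x.1 y.1 ∧ G₂.Adj x.2 y.2))
  symm := by
    constructor; rintro x y ⟨hne, (⟨h, h'⟩ | ⟨h, h'⟩ | ⟨h, h'⟩)⟩
    · exact ⟨hne.symm, Or.inl ⟨h.symm, h'.symm⟩⟩
    · exact ⟨hne.symm, Or.inr (Or.inl ⟨h.symm, h'.symm⟩)⟩
    · exact ⟨hne.symm, Or.inr (Or.inr ⟨h.symm, h'.symm⟩)⟩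
  loopless := by constructor; rintro x ⟨hx, -⟩; exact hx rfl

/-- The lexicographic product of simple graphs. -/
def lexGraphProd (G₁ : SimpleGraph V₁) (G₂ : SimpleGraph V₂) : SimpleGraph (V₁ × V₂) where
  Adj x y := G₁.Adj x.1 y.1 ∨ (x.1 = y.1 ∧ G₂.Adj x.2 y.2)
  symm := by
    constructor; rintro x y (h | ⟨h, h'⟩)
    · exact Or.inl h.symm
    · exact Or.inr ⟨h.symm, h'.symm⟩
  loopless := by
    constructor; rintro x (h | ⟨-, h⟩)
    · exact G₁.irrefl h
    · exact G₂.irrefl h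

end SimpleGraph

namespace FinHypergraph

variable {W W₁ W₂ : Type*}

theorem cartProd_loopless' (H₁ : FinHypergraph W₁) (H₂ : FinHypergraph W₂)
    (h₁ : H₁.Loopless) (h₂ : H₂.Loopless) : (H₁.cartProd H₂).Loopless := by
  rintro E (⟨x, f, hf, rfl⟩ | ⟨e, he, y, rfl⟩)
  · simpa [Finset.card_product] using h₂ f hf
  · simpa [Finset.card_product] using h₁ e he

theorem exists_strong' [Fintype W] (H : FinHypergraph W) (h : H.Loopless) :
    ∃ c : W → Fin (Fintype.card W), H.IsStrongColoring c := by
  refine ⟨Fintype.equivFin W, ?_, ?_⟩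
  · intro e he i hall
    obtain ⟨u, hu, v, hv, huv⟩ := Finset.one_lt_card.mp (h e he)
    exact huv ((Fintype.equivFin W).injective (((hall u hu).trans (hall v hv).symm)))
  · intro e he u hu v hv huv hc
    exact huv ((Fintype.equivFin W).injective hc)

end FinHypergraph

/-- chromatic number and strong chromatic number of the Cartesian product of
loopless hypergraphs are the maxima of those of the factors. -/
theorem chromaticNumber_cartProd {V₁ V₂ : Type*} [Fintype V₁] [Nonempty V₁]
    [Fintype V₂] [Nonempty V₂] (H₁ : FinHypergraph V₁) (H₂ : FinHypergraph V₂)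
    (h₁ : H₁.Loopless) (h₂ : H₂.Loopless) :
    (H₁.cartProd H₂).chromaticNumber = max H₁.chromaticNumber H₂.chromaticNumber ∧
      (H₁.cartProd H₂).strongChromaticNumber =
        max H₁.strongChromaticNumber H₂.strongChromaticNumber := by
  classical
  obtain ⟨x₀⟩ := ‹Nonempty V₁›
  obtain ⟨y₀⟩ := ‹Nonempty V₂›
  have hP := FinHypergraph.cartProd_loopless' H₁ H₂ h₁ h₂
  obtain ⟨d₁, hd₁⟩ := FinHypergraph.exists_strong' H₁ h₁
  obtain ⟨d₂, hd₂⟩ := FinHypergraph.exists_strong' H₂ h₂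
  obtain ⟨dP, hdP⟩ := FinHypergraph.exists_strong' (H₁.cartProd H₂) hP
  -- restriction lemmas
  have restrict₁ : ∀ {k : ℕ} (c : V₁ × V₂ → Fin k), (H₁.cartProd H₂).IsProperColoring c →
      H₁.IsProperColoring (fun x => c (x, y₀)) := by
    intro k c hc e he i hall
    refine hc (e ×ˢ {y₀}) (Or.inr ⟨e, he, y₀, rfl⟩) i ?_
    rintro ⟨a, b⟩ hab
    rw [Finset.mem_product, Finset.mem_singleton] at hab
    obtain ⟨ha, rfl⟩ := hab
    exact hall a ha
  have restrict₂ : ∀ {k : ℕ} (c : V₁ × V₂ → Fin k), (H₁.cartProd H₂).IsProperColoring c →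
      H₂.IsProperColoring (fun y => c (x₀, y)) := by
    intro k c hc f hf i hall
    refine hc ({x₀} ×ˢ f) (Or.inl ⟨x₀, f, hf, rfl⟩) i ?_
    rintro ⟨a, b⟩ hab
    rw [Finset.mem_product, Finset.mem_singleton] at hab
    obtain ⟨rfl, hb⟩ := hab
    exact hall b hb
  have srestrict₁ : ∀ {k : ℕ} (c : V₁ × V₂ → Fin k), (H₁.cartProd H₂).IsStrongColoring c →
      H₁.IsStrongColoring (fun x => c (x, y₀)) := by
    intro k c hc
    refine ⟨restrict₁ c hc.1, ?_⟩
    intro e he u hu v hv huv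
    exact hc.2 (e ×ˢ {y₀}) (Or.inr ⟨e, he, y₀, rfl⟩) (u, y₀) (by simp [hu]) (v, y₀)
      (by simp [hv]) (by simp [huv])
  have srestrict₂ : ∀ {k : ℕ} (c : V₁ × V₂ → Fin k), (H₁.cartProd H₂).IsStrongColoring c →
      H₂.IsStrongColoring (fun y => c (x₀, y)) := by
    intro k c hc
    refine ⟨restrict₂ c hc.1, ?_⟩
    intro f hf u hu v hv huv
    exact hc.2 ({x₀} ×ˢ f) (Or.inl ⟨x₀, f, hf, rfl⟩) (x₀, u) (by simp [hu]) (x₀, v)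
      (by simp [hv]) (by simp [huv])
  -- combination lemma
  have combine : ∀ {k₁ k₂ : ℕ} (c₁ : V₁ → Fin k₁) (c₂ : V₂ → Fin k₂),
      ∃ c : V₁ × V₂ → Fin (max k₁ k₂),
        (H₁.IsProperColoring c₁ → H₂.IsProperColoring c₂ →
          (H₁.cartProd H₂).IsProperColoring c) ∧
        (H₁.IsStrongColoring c₁ → H₂.IsStrongColoring c₂ →
          (H₁.cartProd H₂).IsStrongColoring c) := by
    intro k₁ k₂ c₁ c₂
    have hk : 0 < max k₁ k₂ := lt_of_lt_of_le (c₁ x₀).pos (le_max_left _ _)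
    set m := max k₁ k₂ with hm
    refine ⟨fun p => ⟨((c₁ p.1 : ℕ) + (c₂ p.2 : ℕ)) % m, Nat.mod_lt _ hk⟩, ?_⟩
    set c : V₁ × V₂ → Fin m :=
      fun p => ⟨((c₁ p.1 : ℕ) + (c₂ p.2 : ℕ)) % m, Nat.mod_lt _ hk⟩ with hcdef
    have key₂ : ∀ (x : V₁) (b b' : V₂), c (x, b) = c (x, b') → c₂ b = c₂ b' := by
      intro x b b' h
      have h' : ((c₁ x : ℕ) + (c₂ b : ℕ)) % m = ((c₁ x : ℕ) + (c₂ b' : ℕ)) % m :=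
        congrArg Fin.val h
      have h2 : (c₂ b : ℕ) % m = (c₂ b' : ℕ) % m := Nat.ModEq.add_left_cancel' _ h'
      refine Fin.ext ?_
      rwa [Nat.mod_eq_of_lt (lt_of_lt_of_le (c₂ b).isLt (le_max_right _ _)),
        Nat.mod_eq_of_lt (lt_of_lt_of_le (c₂ b').isLt (le_max_right _ _))] at h2
    have key₁ : ∀ (y : V₂) (a a' : V₁), c (a, y) = c (a', y) → c₁ a = c₁ a' := by
      intro y a a' h
      have h' : ((c₁ a : ℕ) + (c₂ y : ℕ)) % m = ((c₁ a' : ℕ) + (c₂ y : ℕ)) % m :=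
        congrArg Fin.val h
      have h2 : (c₁ a : ℕ) % m = (c₁ a' : ℕ) % m := Nat.ModEq.add_right_cancel' _ h'
      refine Fin.ext ?_
      rwa [Nat.mod_eq_of_lt (lt_of_lt_of_le (c₁ a).isLt (le_max_left _ _)),
        Nat.mod_eq_of_lt (lt_of_lt_of_le (c₁ a').isLt (le_max_left _ _))] at h2
    have prop : H₁.IsProperColoring c₁ → H₂.IsProperColoring c₂ →
        (H₁.cartProd H₂).IsProperColoring c := by
      intro hp₁ hp₂
      rintro E (⟨x, f, hf, rfl⟩ | ⟨e, he, y, rfl⟩) i hall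
      · obtain ⟨b, hb⟩ := H₂.nonempty_edges f hf
        have := hp₂ f hf (c₂ b)
        push_neg at this
        obtain ⟨b', hb', hbb'⟩ := this
        exact hbb' (key₂ x b' b (((hall (x, b') (by simp [hb'])).trans
          (hall (x, b) (by simp [hb])).symm)))
      · obtain ⟨a, ha⟩ := H₁.nonempty_edges e he
        have := hp₁ e he (c₁ a)
        push_neg at this
        obtain ⟨a', ha', haa'⟩ := this
        exact haa' (key₁ y a' a (((hall (a', y) (by simp [ha'])).trans
          (hall (a, y) (by simp [ha])).symm)))
    refine ⟨prop, ?_⟩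
    intro hs₁ hs₂
    refine ⟨prop hs₁.1 hs₂.1, ?_⟩
    rintro E (⟨x, f, hf, rfl⟩ | ⟨e, he, y, rfl⟩) u hu v hv huv hc
    · obtain ⟨ua, ub⟩ := u
      obtain ⟨va, vb⟩ := v
      rw [Finset.mem_product, Finset.mem_singleton] at hu hv
      obtain ⟨hua, hub⟩ := hu
      obtain ⟨hva, hvb⟩ := hv
      replace hua : ua = x := hua
      replace hva : va = x := hva
      have h2 : ub ≠ vb := fun h => huv (by rw [hua, hva, h])
      rw [hua, hva] at hc
      exact hs₂.2 f hf ub hub vb hvb h2 (key₂ x ub vb hc)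
    · obtain ⟨ua, ub⟩ := u
      obtain ⟨va, vb⟩ := v
      rw [Finset.mem_product, Finset.mem_singleton] at hu hv
      obtain ⟨hua, hub⟩ := hu
      obtain ⟨hva, hvb⟩ := hv
      replace hub : ub = y := hub
      replace hvb : vb = y := hvb
      have h1 : ua ≠ va := fun h => huv (by rw [hub, hvb, h])
      rw [hub, hvb] at hc
      exact hs₁.2 e he ua hua va hva h1 (key₁ y ua va hc)
  -- nonemptiness of the coloring sets
  have ne₁p : {k : ℕ | ∃ c : V₁ → Fin k, H₁.IsProperColoring c}.Nonempty :=
    ⟨_, d₁, hd₁.1⟩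
  have ne₂p : {k : ℕ | ∃ c : V₂ → Fin k, H₂.IsProperColoring c}.Nonempty :=
    ⟨_, d₂, hd₂.1⟩
  have nePp : {k : ℕ | ∃ c : V₁ × V₂ → Fin k, (H₁.cartProd H₂).IsProperColoring c}.Nonempty :=
    ⟨_, dP, hdP.1⟩
  have ne₁s : {k : ℕ | ∃ c : V₁ → Fin k, H₁.IsStrongColoring c}.Nonempty := ⟨_, d₁, hd₁⟩
  have ne₂s : {k : ℕ | ∃ c : V₂ → Fin k, H₂.IsStrongColoring c}.Nonempty := ⟨_, d₂, hd₂⟩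
  have nePs : {k : ℕ | ∃ c : V₁ × V₂ → Fin k, (H₁.cartProd H₂).IsStrongColoring c}.Nonempty :=
    ⟨_, dP, hdP⟩
  constructor
  · apply le_antisymm
    · obtain ⟨e₁, he₁⟩ := Nat.sInf_mem ne₁p
      obtain ⟨e₂, he₂⟩ := Nat.sInf_mem ne₂p
      obtain ⟨c, hc, -⟩ := combine e₁ e₂
      exact Nat.sInf_le ⟨c, hc he₁ he₂⟩
    · obtain ⟨cP, hcP⟩ := Nat.sInf_mem nePp
      exact max_le (Nat.sInf_le ⟨_, restrict₁ cP hcP⟩) (Nat.sInf_le ⟨_, restrict₂ cP hcP⟩)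
  · apply le_antisymm
    · obtain ⟨e₁, he₁⟩ := Nat.sInf_mem ne₁s
      obtain ⟨e₂, he₂⟩ := Nat.sInf_mem ne₂s
      obtain ⟨c, -, hc⟩ := combine e₁ e₂
      exact Nat.sInf_le ⟨c, hc he₁ he₂⟩
    · obtain ⟨cP, hcP⟩ := Nat.sInf_mem nePs
      exact max_le (Nat.sInf_le ⟨_, srestrict₁ cP hcP⟩) (Nat.sInf_le ⟨_, srestrict₂ cP hcP⟩)
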